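/- Let I ∈ Δ₂ be an increasing bijection of (0,1) onto (0,1). For measurable f on (0,1) and t ∈ (0,1) define the K-functional K(f,t) = inf{ ‖g‖_{m_I} + t·‖h‖_∞ : f = g + h, g and h measurable on (0,1) }. Then there exist c₁, c₂ > 0 such that for every measurable f with ‖f‖_{m_I} < ∞ and every t ∈ (0,1): c₁·sup_{0<s≤I^{-1}(t)} I(s) f^*(s) ≤ K(f,t) ≤ c₂·sup_{0<s≤I^{-1}(t)} I(s) f^*(s). -/

import Mathlib

open MeasureTheory Set Filter
open scoped ENNReal

noncomputable section

/-- The nonincreasing rearrangement of `f` over `(0,1)`. -/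
def rearr (f : ℝ → ℝ≥0∞) (t : ℝ) : ℝ≥0∞ :=
  sInf {l : ℝ≥0∞ | volume {s ∈ Set.Ioo (0:ℝ) 1 | l < f s} ≤ ENNReal.ofReal t}

/-- The maximal nonincreasing rearrangement `f^{**}(t) = (1/t) ∫_0^t f^*(s) ds`. -/
def dstar (f : ℝ → ℝ≥0∞) (t : ℝ) : ℝ≥0∞ :=
  (ENNReal.ofReal t)⁻¹ * ∫⁻ s in Set.Ioo (0:ℝ) t, rearr f s

/-- The `L¹(0,1)` norm. -/
def lOne (f : ℝ → ℝ≥0∞) : ℝ≥0∞ := ∫⁻ t in Set.Ioo (0:ℝ) 1, f t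

/-- The norm of the Marcinkiewicz-type space `m_I`. -/
def mNorm (I : ℝ → ℝ) (f : ℝ → ℝ≥0∞) : ℝ≥0∞ :=
  ⨆ t ∈ Set.Ioo (0:ℝ) 1, ENNReal.ofReal (I t) * rearr f t

/-- The norm of `m_Ĩ` where `Ĩ(t) = t / I(t)`. -/
def mNormTilde (I : ℝ → ℝ) (f : ℝ → ℝ≥0∞) : ℝ≥0∞ :=
  ⨆ t ∈ Set.Ioo (0:ℝ) 1, ENNReal.ofReal (t / I t) * rearr f t

/-- The supremum operator `S_I f(t) = (1/I(t)) sup_{0<s≤t} I(s) f^*(s)`. -/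
def SI (I : ℝ → ℝ) (f : ℝ → ℝ≥0∞) : ℝ → ℝ≥0∞ := fun t =>
  (ENNReal.ofReal (I t))⁻¹ * ⨆ s ∈ Set.Ioc (0:ℝ) t, ENNReal.ofReal (I s) * rearr f s

/-- The supremum operator `T_I f(t) = (I(t)/t) sup_{t≤s<1} (s/I(s)) f^*(s)`. -/
def TI (I : ℝ → ℝ) (f : ℝ → ℝ≥0∞) : ℝ → ℝ≥0∞ := fun t =>
  ENNReal.ofReal (I t / t) * ⨆ s ∈ Set.Ico t 1, ENNReal.ofReal (s / I s) * rearr f s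

/-- `H_I f(t) = ∫_t^1 f(s)/I(s) ds`. -/
def HI (I : ℝ → ℝ) (f : ℝ → ℝ≥0∞) : ℝ → ℝ≥0∞ := fun t =>
  ∫⁻ s in Set.Ioo t 1, f s / ENNReal.ofReal (I s)

/-- `R_I f(t) = (1/I(t)) ∫_0^t f(s) ds`. -/
def RI (I : ℝ → ℝ) (f : ℝ → ℝ≥0∞) : ℝ → ℝ≥0∞ := fun t =>
  (ENNReal.ofReal (I t))⁻¹ * ∫⁻ s in Set.Ioo (0:ℝ) t, f s

/-- `I : (0,1) → (0,1)` is quasiconcave: a nondecreasing bijection of `(0,1)` onto `(0,1)`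
with `I(t)/t` nonincreasing, `I(0+) = 0` and `I(1-) = 1`. -/
def Quasiconcave (I : ℝ → ℝ) : Prop :=
  Set.BijOn I (Set.Ioo 0 1) (Set.Ioo 0 1) ∧
  MonotoneOn I (Set.Ioo 0 1) ∧
  AntitoneOn (fun t => I t / t) (Set.Ioo 0 1) ∧
  Tendsto I (nhdsWithin 0 (Set.Ioo 0 1)) (nhds 0) ∧
  Tendsto I (nhdsWithin 1 (Set.Ioo 0 1)) (nhds 1)

/-- Condition (★): `∫_0^t I(s)/s ds ≲ I(t)`. -/
def StarCond (I : ℝ → ℝ) : Prop :=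
  ∃ C : ℝ, 0 < C ∧ ∀ t ∈ Set.Ioo (0:ℝ) 1,
    ∫⁻ s in Set.Ioo (0:ℝ) t, ENNReal.ofReal (I s / s) ≤ ENNReal.ofReal (C * I t)

/-- The average property: `∫_0^t ds/I(s) ≲ t/I(t)`. -/
def AvgProp (I : ℝ → ℝ) : Prop :=
  ∃ C : ℝ, 0 < C ∧ ∀ t ∈ Set.Ioo (0:ℝ) 1,
    ∫⁻ s in Set.Ioo (0:ℝ) t, ENNReal.ofReal (1 / I s) ≤ ENNReal.ofReal (C * (t / I t))

/-- The condition `∫_t^1 I(s)/s² ds ≲ (1/t) ∫_0^t I(s)/s ds`. -/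
def MaxCond (I : ℝ → ℝ) : Prop :=
  ∃ C : ℝ, 0 < C ∧ ∀ t ∈ Set.Ioo (0:ℝ) 1,
    ∫⁻ s in Set.Ioo t 1, ENNReal.ofReal (I s / s ^ 2) ≤
      ENNReal.ofReal (C / t) * ∫⁻ s in Set.Ioo (0:ℝ) t, ENNReal.ofReal (I s / s)

/-- The class `𝒬` of quasiconcave functions. -/
def ClassQ (I : ℝ → ℝ) : Prop :=
  Quasiconcave I ∧ StarCond I ∧ AvgProp I ∧ MaxCond I ∧
  ∃ c d : ℝ,
    IsLUB {l : ℝ | 0 ≤ l ∧ ∀ t ∈ Set.Ioo (0:ℝ) 1,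
      ENNReal.ofReal (l * (I t / t ^ 2 - 1)) ≤
        ∫⁻ s in Set.Ioo t 1, ENNReal.ofReal (I s / s ^ 3)} c ∧
    IsLeast {e : ℝ | 0 < e ∧ ∀ t ∈ Set.Ioo (0:ℝ) 1,
      ∫⁻ s in Set.Ioo t 1, ENNReal.ofReal (I s / s ^ 2) ≤
        ENNReal.ofReal (e * (I t / t))} d ∧
    (1 - c) * d ≤ c

/-- The `Δ₂` condition: `I(2t) ≤ C I(t)` for `t ∈ (0,1/2)`. -/
def Delta2 (I : ℝ → ℝ) : Prop :=
  ∃ C : ℝ, 0 < C ∧ ∀ t ∈ Set.Ioo (0:ℝ) (1/2), I (2 * t) ≤ C * I t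

/-- A rearrangement-invariant Banach function norm on `M₊(0,1)`. -/
def IsRiNorm (ρ : (ℝ → ℝ≥0∞) → ℝ≥0∞) : Prop :=
  (∀ f : ℝ → ℝ≥0∞, Measurable f →
      (ρ f = 0 ↔ f =ᵐ[volume.restrict (Set.Ioo (0:ℝ) 1)] 0)) ∧
  (∀ f : ℝ → ℝ≥0∞, Measurable f → ∀ a : ℝ, 0 ≤ a →
      ρ (fun t => ENNReal.ofReal a * f t) = ENNReal.ofReal a * ρ f) ∧
  (∀ f g : ℝ → ℝ≥0∞, Measurable f → Measurable g →
      ρ (fun t => f t + g t) ≤ ρ f + ρ g) ∧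
  (∀ f g : ℝ → ℝ≥0∞, Measurable f → Measurable g →
      (∀ᵐ t ∂(volume.restrict (Set.Ioo (0:ℝ) 1)), f t ≤ g t) → ρ f ≤ ρ g) ∧
  (∀ (fn : ℕ → ℝ → ℝ≥0∞) (f : ℝ → ℝ≥0∞), (∀ n, Measurable (fn n)) → Measurable f →
      (∀ᵐ t ∂(volume.restrict (Set.Ioo (0:ℝ) 1)), Monotone (fun n => fn n t)) →
      (∀ᵐ t ∂(volume.restrict (Set.Ioo (0:ℝ) 1)), (⨆ n, fn n t) = f t) →
      (⨆ n, ρ (fn n)) = ρ f) ∧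
  (ρ (fun _ => 1) < ⊤) ∧
  (∃ c : ℝ, 0 < c ∧ ∀ f : ℝ → ℝ≥0∞, Measurable f →
      ∫⁻ t in Set.Ioo (0:ℝ) 1, f t ≤ ENNReal.ofReal c * ρ f) ∧
  (∀ f : ℝ → ℝ≥0∞, Measurable f → ρ f = ρ (rearr f))

/-- The associate norm `ρ'`. -/
def assoc (ρ : (ℝ → ℝ≥0∞) → ℝ≥0∞) (f : ℝ → ℝ≥0∞) : ℝ≥0∞ :=
  ⨆ (g : ℝ → ℝ≥0∞) (_ : Measurable g ∧ ρ g ≤ 1),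
    ∫⁻ t in Set.Ioo (0:ℝ) 1, f t * g t

/-- The optimal target norm `‖f‖_{Y_X}` of the r.i. norm `ρ = ‖·‖_X` under `H_I`. -/
def optTargetNorm (I : ℝ → ℝ) (ρ : (ℝ → ℝ≥0∞) → ℝ≥0∞) (f : ℝ → ℝ≥0∞) : ℝ≥0∞ :=
  ⨆ (g : ℝ → ℝ≥0∞) (_ : Measurable g ∧ assoc ρ (RI I (rearr g)) ≤ 1),
    ∫⁻ t in Set.Ioo (0:ℝ) 1, rearr f t * rearr g t

/-- The optimal domain norm `‖f‖_{X_Y} = sup_{h ∼ f} ‖H_I h‖_Y`. -/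
def optDomainNorm (I : ℝ → ℝ) (ρY : (ℝ → ℝ≥0∞) → ℝ≥0∞) (f : ℝ → ℝ≥0∞) : ℝ≥0∞ :=
  ⨆ (h : ℝ → ℝ≥0∞)
    (_ : Measurable h ∧ ∀ t ∈ Set.Ioo (0:ℝ) 1, rearr h t = rearr f t),
      ρY (HI I h)

/-- `H_I : X → Y` boundedly. -/
def HIBounded (I : ℝ → ℝ) (ρX ρY : (ℝ → ℝ≥0∞) → ℝ≥0∞) : Prop :=
  ∃ C : ℝ, 0 < C ∧ ∀ f : ℝ → ℝ≥0∞, Measurable f →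
    ρY (HI I f) ≤ ENNReal.ofReal C * ρX f

/-- `X` is the optimal domain space for `Y` under `H_I`. -/
def IsOptimalDomain (I : ℝ → ℝ) (ρX ρY : (ℝ → ℝ≥0∞) → ℝ≥0∞) : Prop :=
  HIBounded I ρX ρY ∧
  ∀ ρZ : (ℝ → ℝ≥0∞) → ℝ≥0∞, IsRiNorm ρZ → HIBounded I ρZ ρY →
    ∃ C : ℝ, 0 < C ∧ ∀ f : ℝ → ℝ≥0∞, Measurable f →
      ρX f ≤ ENNReal.ofReal C * ρZ f

/-- `Y` is the optimal target space for `X` under `H_I`. -/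
def IsOptimalTarget (I : ℝ → ℝ) (ρX ρY : (ℝ → ℝ≥0∞) → ℝ≥0∞) : Prop :=
  HIBounded I ρX ρY ∧
  ∀ ρZ : (ℝ → ℝ≥0∞) → ℝ≥0∞, IsRiNorm ρZ → HIBounded I ρX ρZ →
    ∃ C : ℝ, 0 < C ∧ ∀ f : ℝ → ℝ≥0∞, Measurable f →
      ρZ f ≤ ENNReal.ofReal C * ρY f

/-- The `K`-functional for the couple `(m_I, L^∞)` over `(0,1)`. -/
def Kmi (I : ℝ → ℝ) (f : ℝ → ℝ≥0∞) (t : ℝ) : ℝ≥0∞ :=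
  ⨅ (g : ℝ → ℝ≥0∞) (h : ℝ → ℝ≥0∞)
    (_ : Measurable g ∧ Measurable h ∧ ∀ s ∈ Set.Ioo (0:ℝ) 1, f s = g s + h s),
      mNorm I g + ENNReal.ofReal t * essSup h (volume.restrict (Set.Ioo (0:ℝ) 1))

section Aux

lemma rearr_mono_fun {f g : ℝ → ℝ≥0∞} (h : ∀ x ∈ Set.Ioo (0:ℝ) 1, g x ≤ f x) (t : ℝ) :
    rearr g t ≤ rearr f t := by
  apply sInf_le_sInf
  intro l hl
  refine le_trans (measure_mono ?_) hl
  intro x hx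
  exact ⟨hx.1, lt_of_lt_of_le hx.2 (h x hx.1)⟩

lemma rearr_decomp_le {f g k : ℝ → ℝ≥0∞} (hk : Measurable k)
    (hsum : ∀ x ∈ Set.Ioo (0:ℝ) 1, f x = g x + k x) (s : ℝ) :
    rearr f s ≤ rearr g s + essSup k (volume.restrict (Set.Ioo (0:ℝ) 1)) := by
  set b := essSup k (volume.restrict (Set.Ioo (0:ℝ) 1)) with hbdef
  have hb0 : volume ({x | b < k x} ∩ Set.Ioo (0:ℝ) 1) = 0 := by
    have h1 := ae_le_essSup (μ := volume.restrict (Set.Ioo (0:ℝ) 1)) (f := k)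
    rw [ae_iff] at h1
    have h2 : {x : ℝ | ¬ k x ≤ b} = k ⁻¹' Set.Ioi b := by
      ext x; simp [not_le]
    rw [h2, Measure.restrict_apply (hk measurableSet_Ioi)] at h1
    exact h1
  have key : ∀ l ∈ {l : ℝ≥0∞ | volume {x ∈ Set.Ioo (0:ℝ) 1 | l < g x} ≤ ENNReal.ofReal s},
      rearr f s ≤ l + b := by
    intro l hl
    apply sInf_le
    show volume {x ∈ Set.Ioo (0:ℝ) 1 | l + b < f x} ≤ ENNReal.ofReal s
    have hsub : {x ∈ Set.Ioo (0:ℝ) 1 | l + b < f x} ⊆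
        {x ∈ Set.Ioo (0:ℝ) 1 | l < g x} ∪ ({x | b < k x} ∩ Set.Ioo (0:ℝ) 1) := by
      intro x hx
      rcases lt_or_ge l (g x) with hgx | hgx
      · exact Or.inl ⟨hx.1, hgx⟩
      rcases lt_or_ge b (k x) with hkx | hkx
      · exact Or.inr ⟨hkx, hx.1⟩
      exfalso
      have h3 := hx.2
      rw [hsum x hx.1] at h3
      exact absurd h3 (not_lt.2 (add_le_add hgx hkx))
    calc volume {x ∈ Set.Ioo (0:ℝ) 1 | l + b < f x}
        ≤ volume ({x ∈ Set.Ioo (0:ℝ) 1 | l < g x} ∪ ({x | b < k x} ∩ Set.Ioo (0:ℝ) 1)) :=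
          measure_mono hsub
      _ ≤ volume {x ∈ Set.Ioo (0:ℝ) 1 | l < g x} + volume ({x | b < k x} ∩ Set.Ioo (0:ℝ) 1) :=
          measure_union_le _ _
      _ ≤ ENNReal.ofReal s + 0 := add_le_add hl hb0.le
      _ = ENNReal.ofReal s := add_zero _
  calc rearr f s ≤ ⨅ l ∈ {l : ℝ≥0∞ |
          volume {x ∈ Set.Ioo (0:ℝ) 1 | l < g x} ≤ ENNReal.ofReal s}, (l + b) := le_iInf₂ key
    _ = rearr g s + b := ENNReal.sInf_add.symm

lemma measure_lt_rearr_le {f : ℝ → ℝ≥0∞} {u : ℝ} (hfin : rearr f u ≠ ⊤) :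
    volume {x ∈ Set.Ioo (0:ℝ) 1 | rearr f u < f x} ≤ ENNReal.ofReal u := by
  set lam := rearr f u with hlam
  set A : ℕ → Set ℝ := fun n => {x ∈ Set.Ioo (0:ℝ) 1 | lam + ((n+1 : ℕ) : ℝ≥0∞)⁻¹ < f x}
    with hA
  have hmono : Monotone A := by
    intro m n hmn x hx
    refine ⟨hx.1, lt_of_le_of_lt (add_le_add le_rfl ?_) hx.2⟩
    exact ENNReal.inv_le_inv.2 (by exact_mod_cast Nat.succ_le_succ hmn)
  have hcover : {x ∈ Set.Ioo (0:ℝ) 1 | lam < f x} ⊆ ⋃ n, A n := by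
    intro x hx
    obtain ⟨r, hr0, hr⟩ := ENNReal.lt_iff_exists_add_pos_lt.1 hx.2
    obtain ⟨n, hn⟩ := ENNReal.exists_inv_nat_lt
      (show ((r : ℝ≥0∞)) ≠ 0 by exact_mod_cast hr0.ne')
    refine Set.mem_iUnion.2 ⟨n, hx.1, lt_of_le_of_lt (add_le_add le_rfl ?_) hr⟩
    refine le_trans (ENNReal.inv_le_inv.2 ?_) hn.le
    exact_mod_cast Nat.le_succ n
  have hAn : ∀ n, volume (A n) ≤ ENNReal.ofReal u := by
    intro n
    have hlt : sInf {l : ℝ≥0∞ | volume {x ∈ Set.Ioo (0:ℝ) 1 | l < f x} ≤ ENNReal.ofReal u}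
        < lam + ((n+1 : ℕ) : ℝ≥0∞)⁻¹ := by
      rw [← rearr, ← hlam]
      exact ENNReal.lt_add_right hfin (ENNReal.inv_ne_zero.2 (ENNReal.natCast_ne_top _))
    obtain ⟨l, hl, hll⟩ := sInf_lt_iff.1 hlt
    refine le_trans (measure_mono ?_) hl
    intro x hx
    exact ⟨hx.1, hll.trans hx.2⟩
  calc volume {x ∈ Set.Ioo (0:ℝ) 1 | lam < f x}
      ≤ volume (⋃ n, A n) := measure_mono hcover
    _ = ⨆ n, volume (A n) := hmono.directed_le.measure_iUnion
    _ ≤ ENNReal.ofReal u := iSup_le hAn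

end Aux

/-- Lemma 3.7 / `lem:KFunctional`.  For `I ∈ Δ₂` an increasing bijection of
`(0,1)` onto itself, `K(f, t, m_I, L^∞) ≈ sup_{0<s≤I⁻¹(t)} I(s) f^*(s)`. -/
theorem statement7 (I : ℝ → ℝ) (hd2 : Delta2 I)
    (hsm : StrictMonoOn I (Set.Ioo 0 1))
    (hbij : Set.BijOn I (Set.Ioo 0 1) (Set.Ioo 0 1))
    (J : ℝ → ℝ) (hJ : Set.InvOn J I (Set.Ioo 0 1) (Set.Ioo 0 1))
    (hJmaps : Set.MapsTo J (Set.Ioo 0 1) (Set.Ioo 0 1)) :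
    ∃ c₁ c₂ : ℝ, 0 < c₁ ∧ 0 < c₂ ∧
      ∀ f : ℝ → ℝ≥0∞, Measurable f → mNorm I f < ⊤ → ∀ t ∈ Set.Ioo (0:ℝ) 1,
        ENNReal.ofReal c₁ *
            (⨆ s ∈ Set.Ioc (0:ℝ) (J t), ENNReal.ofReal (I s) * rearr f s) ≤ Kmi I f t ∧
          Kmi I f t ≤
            ENNReal.ofReal c₂ *
              ⨆ s ∈ Set.Ioc (0:ℝ) (J t), ENNReal.ofReal (I s) * rearr f s := by
  refine ⟨1, 2, one_pos, two_pos, ?_⟩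
  intro f hf hfin t ht
  have hJt : J t ∈ Set.Ioo (0:ℝ) 1 := hJmaps ht
  have hIJt : I (J t) = t := hJ.2 ht
  constructor
  · -- lower bound, c₁ = 1
    rw [ENNReal.ofReal_one, one_mul]
    refine le_iInf fun g => le_iInf fun k => le_iInf fun hP => ?_
    obtain ⟨hg, hk, hsum⟩ := hP
    refine iSup₂_le fun s hs => ?_
    have hs1 : s ∈ Set.Ioo (0:ℝ) 1 := ⟨hs.1, hs.2.trans_lt hJt.2⟩
    have hsub := rearr_decomp_le hk hsum s
    have hIle : ENNReal.ofReal (I s) ≤ ENNReal.ofReal t := by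
      rw [← hIJt]
      exact ENNReal.ofReal_le_ofReal (hsm.monotoneOn hs1 hJt hs.2)
    calc ENNReal.ofReal (I s) * rearr f s
        ≤ ENNReal.ofReal (I s) *
            (rearr g s + essSup k (volume.restrict (Set.Ioo (0:ℝ) 1))) :=
          mul_le_mul_of_nonneg_left hsub (zero_le)
      _ = ENNReal.ofReal (I s) * rearr g s +
            ENNReal.ofReal (I s) * essSup k (volume.restrict (Set.Ioo (0:ℝ) 1)) :=
          mul_add _ _ _
      _ ≤ mNorm I g + ENNReal.ofReal t * essSup k (volume.restrict (Set.Ioo (0:ℝ) 1)) := by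
          refine add_le_add ?_ (mul_le_mul_of_nonneg_right hIle (zero_le))
          exact le_iSup₂ (f := fun u (_ : u ∈ Set.Ioo (0:ℝ) 1) =>
            ENNReal.ofReal (I u) * rearr g u) s hs1
  · -- upper bound, c₂ = 2
    have hlam_ne : rearr f (J t) ≠ ⊤ := by
      intro h
      have hle : ENNReal.ofReal (I (J t)) * rearr f (J t) ≤ mNorm I f :=
        le_iSup₂ (f := fun u (_ : u ∈ Set.Ioo (0:ℝ) 1) =>
          ENNReal.ofReal (I u) * rearr f u) (J t) hJt
      rw [h, hIJt, ENNReal.mul_top ((ENNReal.ofReal_pos.2 ht.1).ne')] at hle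
      exact absurd (top_le_iff.1 hle) hfin.ne
    set lam := rearr f (J t) with hlamdef
    set g : ℝ → ℝ≥0∞ := fun x => f x - lam with hgdef
    set k : ℝ → ℝ≥0∞ := fun x => min (f x) lam with hkdef
    have hg : Measurable g := hf.sub measurable_const
    have hk : Measurable k := hf.min measurable_const
    have hsum : ∀ x ∈ Set.Ioo (0:ℝ) 1, f x = g x + k x := by
      intro x _
      simp only [hgdef, hkdef]
      rcases le_total lam (f x) with hle | hle
      · rw [min_eq_right hle, tsub_add_cancel_of_le hle]
      · rw [min_eq_left hle, tsub_eq_zero_of_le hle, zero_add]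
    have hKle : Kmi I f t ≤ mNorm I g +
        ENNReal.ofReal t * essSup k (volume.restrict (Set.Ioo (0:ℝ) 1)) := by
      refine iInf_le_of_le g (iInf_le_of_le k ?_)
      exact iInf_le _ ⟨hg, hk, hsum⟩
    have hmeas : volume {x ∈ Set.Ioo (0:ℝ) 1 | lam < f x} ≤ ENNReal.ofReal (J t) :=
      measure_lt_rearr_le hlam_ne
    have hmg : mNorm I g ≤ ⨆ s ∈ Set.Ioc (0:ℝ) (J t), ENNReal.ofReal (I s) * rearr f s := by
      refine iSup₂_le fun s hs => ?_
      rcases le_or_gt s (J t) with hsle | hslt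
      · have h1 : rearr g s ≤ rearr f s := rearr_mono_fun (fun x _ => tsub_le_self) s
        calc ENNReal.ofReal (I s) * rearr g s
            ≤ ENNReal.ofReal (I s) * rearr f s := mul_le_mul_of_nonneg_left h1 (zero_le)
          _ ≤ _ := le_iSup₂ (f := fun u (_ : u ∈ Set.Ioc (0:ℝ) (J t)) =>
              ENNReal.ofReal (I u) * rearr f u) s ⟨hs.1, hsle⟩
      · have h0 : rearr g s = 0 := by
          refine le_antisymm (sInf_le ?_) (zero_le)
          show volume {x ∈ Set.Ioo (0:ℝ) 1 | 0 < g x} ≤ ENNReal.ofReal s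
          have heq : {x ∈ Set.Ioo (0:ℝ) 1 | 0 < g x} =
              {x ∈ Set.Ioo (0:ℝ) 1 | lam < f x} := by
            ext x
            simp only [Set.mem_setOf_eq, hgdef, tsub_pos_iff_lt]
          rw [heq]
          exact hmeas.trans (ENNReal.ofReal_le_ofReal hslt.le)
        rw [h0, mul_zero]
        exact zero_le
    have hess : essSup k (volume.restrict (Set.Ioo (0:ℝ) 1)) ≤ lam :=
      essSup_le_of_ae_le lam (Filter.Eventually.of_forall fun x => min_le_right _ _)
    have htlam : ENNReal.ofReal t * lam ≤
        ⨆ s ∈ Set.Ioc (0:ℝ) (J t), ENNReal.ofReal (I s) * rearr f s := by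
      have h2 : ENNReal.ofReal (I (J t)) * rearr f (J t) ≤
          ⨆ s ∈ Set.Ioc (0:ℝ) (J t), ENNReal.ofReal (I s) * rearr f s :=
        le_iSup₂ (f := fun u (_ : u ∈ Set.Ioc (0:ℝ) (J t)) =>
          ENNReal.ofReal (I u) * rearr f u) (J t) ⟨hJt.1, le_refl _⟩
      rwa [hIJt] at h2
    calc Kmi I f t ≤ mNorm I g +
          ENNReal.ofReal t * essSup k (volume.restrict (Set.Ioo (0:ℝ) 1)) := hKle
      _ ≤ (⨆ s ∈ Set.Ioc (0:ℝ) (J t), ENNReal.ofReal (I s) * rearr f s) +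
          ⨆ s ∈ Set.Ioc (0:ℝ) (J t), ENNReal.ofReal (I s) * rearr f s :=
        add_le_add hmg (le_trans (mul_le_mul_of_nonneg_left hess (zero_le)) htlam)
      _ = ENNReal.ofReal 2 * ⨆ s ∈ Set.Ioc (0:ℝ) (J t), ENNReal.ofReal (I s) * rearr f s := by
        rw [show (ENNReal.ofReal 2) = 2 by norm_num, two_mul]
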